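/- arXiv:1701.02682 — 2 statements merged into one kernel-verified Lean document; each statement's English description precedes it below -/
import Mathlib

section
/- In a state transition system modeling CHR with states given as multisets of user-defined constraints paired with a set of built-in constraints, the transition relation is monotonic: if G ↦* G' then (G ∧ H) ↦* (G' ∧ H) for any additional goal H, where ∧ denotes (multiset) union of the constraints of the states. -/
/-- A CHR rule over user-defined atoms `U` and built-in constraints `B`, given by:
an applicability condition `appl b h` (the matched sub-multiset `h` of user constraints and
the built-in store `b` satisfy the matching/guard condition CT ⊨ ∀(b → ∃x (H = H' ∧ C)));
this condition is monotone in the built-in store, since an implication with a strengthened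
premise still holds (built-ins are only added); applying the rule replaces the matched
constraints `h` by the body user constraints `bodyUd h` and adds the body built-ins
`bodyBi h`. -/
structure CHRRule (U B : Type*) where
  appl : Set B → Multiset U → Prop
  appl_mono : ∀ ⦃b b' : Set B⦄ ⦃h : Multiset U⦄, b ⊆ b' → appl b h → appl b' h
  bodyUd : Multiset U → Multiset U
  bodyBi : Multiset U → Set B

/-- CHR states are pairs (U, B) of a multiset of user-defined atoms and a set of built-in
constraints; one transition step of program `P`. -/
def CHRStep {U B : Type*} [DecidableEq U] (P : Set (CHRRule U B))
    (s t : Multiset U × Set B) : Prop :=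
  ∃ r ∈ P, ∃ h : Multiset U, h ≤ s.1 ∧ r.appl s.2 h ∧
    t = (s.1 - h + r.bodyUd h, s.2 ∪ r.bodyBi h)

/-- CHR monotonicity: if G ↦* G' then (G ∧ H) ↦* (G' ∧ H) for any
additional goal H, where ∧ is (multiset resp. set) union of the constraints. -/
theorem chr_monotonicity {U B : Type*} [DecidableEq U] (P : Set (CHRRule U B))
    (G G' H : Multiset U × Set B)
    (h : Relation.ReflTransGen (CHRStep P) G G') :
    Relation.ReflTransGen (CHRStep P)
      (G.1 + H.1, G.2 ∪ H.2) (G'.1 + H.1, G'.2 ∪ H.2) := by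
  induction h with
  | refl => exact Relation.ReflTransGen.refl
  | tail _ hst ih =>
    refine ih.tail ?_
    obtain ⟨r, hrP, hm, hle, happ, heq⟩ := hst
    refine ⟨r, hrP, hm, le_trans hle (Multiset.le_add_right _ _), r.appl_mono Set.subset_union_left happ, ?_⟩
    subst heq
    refine Prod.ext ?_ ?_
    · dsimp only
      rw [tsub_add_eq_add_tsub hle]
      rw [tsub_add_eq_add_tsub (hle.trans (Multiset.le_add_right _ _)),
        tsub_add_eq_add_tsub (hle.trans (Multiset.le_add_right _ _)), add_right_comm]
    · dsimp only
      simp [Set.union_assoc, Set.union_comm, Set.union_left_comm]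
end

section
/- Given a recursive rule r and a devil's rule d of r, if the condition NT holds — namely, ∃(C ∧ B_bi) is CT-satisfiable and CT ⊨ ∀((C ∧ B_bi) → ∃(C' ∧ O_{B_ud}=O_{H'} ∧ B'_bi)) — then the maximally vicious computation (H_r ∧ C_r) = S₀ ↦_r T₀ ↦_d S₁ ↦_r T₁ ↦_d ⋯ is infinite (never reaches a failed state). -/
/-- Given a recursive rule r: H ⇔ C | B_bi ∧ B_ud and a devil's rule
d: O_{B_ud} \ R_{B_ud} ⇔ C ∧ B_bi | C' ∧ O_{B_ud} = O_{H'} ∧ R_{H'} of r, if the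
condition NT holds — namely ∃(C ∧ B_bi) is CT-satisfiable and
CT ⊨ ∀((C ∧ B_bi) → ∃(C' ∧ O_{B_ud} = O_{H'} ∧ B'_bi)) — then the maximally vicious
computation (H_r ∧ C_r) = S₀ ↦_r T₀ ↦_d S₁ ↦_r T₁ ↦_d ⋯ is infinite, i.e., never reaches
a failed state.

Semantic rendering: assignments of r's variables are `ρ : X → T`; `C`, `Bbi` are the guard
and body built-ins of r; `Oud`, `OH` are the denotations of the overlap parts O_{B_ud} of
the body and O_{H'} of the head (a disjoint variant denotes the same function on its own
assignment, so C' and B'_bi are `C` and `Bbi` applied to the fresh assignment).  Along the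
alternating computation, the i-th pair of r- and d-steps accumulates the built-in
constraints C(ρᵢ) ∧ B_bi(ρᵢ) ∧ C(ρ_{i+1}) ∧ O_{B_ud}(ρᵢ) = O_{H'}(ρ_{i+1}) for the
successive rule-variable instances ρᵢ.  The conclusion — no state of the computation is
failed, hence by the alternation results the computation is infinite — is that all the
accumulated built-in constraints are simultaneously CT-satisfiable: there is an infinite
sequence of assignments satisfying every accumulated constraint. -/
theorem NT_condition_implies_nontermination
    {X T A : Type*}
    (Oud OH : (X → T) → A)
    (C Bbi : (X → T) → Prop)
    (hsat : ∃ ρ : X → T, C ρ ∧ Bbi ρ)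
    (hNT : ∀ ρ : X → T, C ρ ∧ Bbi ρ →
      ∃ ρ' : X → T, C ρ' ∧ Oud ρ = OH ρ' ∧ Bbi ρ') :
    ∃ ρ : ℕ → (X → T), ∀ i : ℕ,
      C (ρ i) ∧ Bbi (ρ i) ∧ Oud (ρ i) = OH (ρ (i + 1)) := by
  classical
  let step : {ρ : X → T // C ρ ∧ Bbi ρ} → {ρ : X → T // C ρ ∧ Bbi ρ} :=
    fun p => ⟨(hNT p.1 p.2).choose,
      (hNT p.1 p.2).choose_spec.1, (hNT p.1 p.2).choose_spec.2.2⟩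
  let seq : ℕ → {ρ : X → T // C ρ ∧ Bbi ρ} := fun n =>
    Nat.rec ⟨hsat.choose, hsat.choose_spec⟩ (fun _ p => step p) n
  refine ⟨fun i => (seq i).1, fun i => ⟨(seq i).2.1, (seq i).2.2, ?_⟩⟩
  exact (hNT (seq i).1 (seq i).2).choose_spec.2.1
end
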